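/- (Paper's Corollary 1: one-step decrease of the finite-horizon value function under the controllability bound.) Let N ≥ 2 and x̄ ∈ ℝⁿ. Suppose (z*,v*) is admissible for horizon N from x̄ and attains V_N(x̄), i.e. ∑_{τ=0}^{N−1} ℓ(z*_τ,v*_τ) ≤ ∑_{τ=0}^{N−1} ℓ(z_τ,v_τ) for every admissible (z,v), with value V_N(x̄) = ∑_{τ=0}^{N−1} ℓ(z*_τ,v*_τ). Assume v*_{N−1} = 0, Az*_{N−1} ∈ 𝒳, and let κ ≥ 0 be such that κQ − AᵀQA is positive semidefinite, and Φ ≥ 0 be such that ℓ*(z*_{N−1}) ≤ Φ·ℓ(x̄, v*₀). Then for every real α ≤ 1 − κΦ, V_N(x̄) ≥ V_N(Ax̄ + Bv*₀) + α·ℓ(x̄, v*₀). -/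

import Mathlib

open Matrix Finset

/-- The stage cost `ℓ(x,u) = ½(xᵀQx + uᵀRu)`. -/
noncomputable def stageCost {n m : ℕ} (Q : Matrix (Fin n) (Fin n) ℝ)
    (R : Matrix (Fin m) (Fin m) ℝ) (x : Fin n → ℝ) (u : Fin m → ℝ) : ℝ :=
  (1/2) * (x ⬝ᵥ Q *ᵥ x + u ⬝ᵥ R *ᵥ u)

/-- `ℓ*(x) = ½xᵀQx`, the minimal stage cost for fixed state `x`. -/
noncomputable def minStageCost {n : ℕ} (Q : Matrix (Fin n) (Fin n) ℝ)
    (x : Fin n → ℝ) : ℝ := (1/2) * (x ⬝ᵥ Q *ᵥ x)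

/-- `(z,v)` is admissible for horizon `N` from `x̄`: `z₀ = x̄`, the dynamics
`z_{τ+1} = Az_τ + Bv_τ` hold for `τ = 0,…,N−2`, `z_τ ∈ 𝒳` and `v_τ ∈ 𝒰` for
`τ = 0,…,N−1`. -/
def Admissible {n m : ℕ} (A : Matrix (Fin n) (Fin n) ℝ) (B : Matrix (Fin n) (Fin m) ℝ)
    (X : Set (Fin n → ℝ)) (U : Set (Fin m → ℝ)) (N : ℕ) (xbar : Fin n → ℝ)
    (z : ℕ → Fin n → ℝ) (v : ℕ → Fin m → ℝ) : Prop :=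
  z 0 = xbar ∧ (∀ τ, τ + 1 < N → z (τ + 1) = A *ᵥ z τ + B *ᵥ v τ) ∧
    (∀ τ < N, z τ ∈ X) ∧ (∀ τ < N, v τ ∈ U)

/-- The finite-horizon optimal value function
`V_N(x̄) = inf {∑_{τ<N} ℓ(z_τ,v_τ) : (z,v) admissible for horizon N from x̄}`. -/
noncomputable def valueFn {n m : ℕ} (A : Matrix (Fin n) (Fin n) ℝ)
    (B : Matrix (Fin n) (Fin m) ℝ) (Q : Matrix (Fin n) (Fin n) ℝ)
    (R : Matrix (Fin m) (Fin m) ℝ) (X : Set (Fin n → ℝ)) (U : Set (Fin m → ℝ))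
    (N : ℕ) (xbar : Fin n → ℝ) : ℝ :=
  sInf {r : ℝ | ∃ (z : ℕ → Fin n → ℝ) (v : ℕ → Fin m → ℝ),
    Admissible A B X U N xbar z v ∧ r = ∑ τ ∈ range N, stageCost Q R (z τ) (v τ)}

lemma stageCost_nonneg {n m : ℕ} {Q : Matrix (Fin n) (Fin n) ℝ}
    {R : Matrix (Fin m) (Fin m) ℝ} (hQ : Q.PosDef) (hR : R.PosDef)
    (x : Fin n → ℝ) (u : Fin m → ℝ) : 0 ≤ stageCost Q R x u := by
  have h1 := hQ.posSemidef.dotProduct_mulVec_nonneg x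
  have h2 := hR.posSemidef.dotProduct_mulVec_nonneg u
  simp only [star_trivial] at h1 h2
  unfold stageCost
  positivity

/-- Paper's Corollary 1: one-step decrease of the finite-horizon value function
under the controllability bound: if `(z*,v*)` attains `V_N(x̄)`, `v*_{N−1} = 0`,
`Az*_{N−1} ∈ 𝒳`, `κQ − AᵀQA ⪰ 0` and `ℓ*(z*_{N−1}) ≤ Φ·ℓ(x̄,v*₀)`, then for
every `α ≤ 1 − κΦ`, `V_N(x̄) ≥ V_N(Ax̄ + Bv*₀) + α·ℓ(x̄,v*₀)`. -/
theorem one_step_value_decrease {n m : ℕ} (hn : 1 ≤ n) (hm : 1 ≤ m)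
    (N : ℕ) (hN : 2 ≤ N)
    (A : Matrix (Fin n) (Fin n) ℝ) (B : Matrix (Fin n) (Fin m) ℝ)
    (Q : Matrix (Fin n) (Fin n) ℝ) (hQ : Q.PosDef)
    (R : Matrix (Fin m) (Fin m) ℝ) (hR : R.PosDef)
    (X : Set (Fin n → ℝ)) (U : Set (Fin m → ℝ)) (hU0 : (0 : Fin m → ℝ) ∈ U)
    (xbar : Fin n → ℝ)
    (zstar : ℕ → Fin n → ℝ) (vstar : ℕ → Fin m → ℝ)
    (hadm : Admissible A B X U N xbar zstar vstar)
    (hopt : ∀ (z : ℕ → Fin n → ℝ) (v : ℕ → Fin m → ℝ), Admissible A B X U N xbar z v →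
      ∑ τ ∈ range N, stageCost Q R (zstar τ) (vstar τ) ≤
        ∑ τ ∈ range N, stageCost Q R (z τ) (v τ))
    (hval : valueFn A B Q R X U N xbar = ∑ τ ∈ range N, stageCost Q R (zstar τ) (vstar τ))
    (hvlast : vstar (N - 1) = 0)
    (hterm : A *ᵥ zstar (N - 1) ∈ X)
    (κ : ℝ) (hκ0 : 0 ≤ κ) (hκ : (κ • Q - Aᵀ * Q * A).PosSemidef)
    (Φ : ℝ) (hΦ0 : 0 ≤ Φ)
    (hΦ : minStageCost Q (zstar (N - 1)) ≤ Φ * stageCost Q R xbar (vstar 0)) :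
    ∀ α : ℝ, α ≤ 1 - κ * Φ →
      valueFn A B Q R X U N xbar ≥
        valueFn A B Q R X U N (A *ᵥ xbar + B *ᵥ vstar 0) +
          α * stageCost Q R xbar (vstar 0) := by
  intro α hα
  obtain ⟨hz0, hdyn, hzX, hvU⟩ := hadm
  set M := N - 1 with hM
  have hMN : N = M + 1 := (Nat.succ_pred_eq_of_pos (by omega)).symm
  -- shifted trajectory
  set z' : ℕ → Fin n → ℝ := fun τ => if τ = M then A *ᵥ zstar M else zstar (τ + 1) with hz'
  set v' : ℕ → Fin m → ℝ := fun τ => if τ = M then 0 else vstar (τ + 1) with hv'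
  have hadm' : Admissible A B X U N (A *ᵥ xbar + B *ᵥ vstar 0) z' v' := by
    refine ⟨?_, ?_, ?_, ?_⟩
    · have h01 : (0:ℕ) ≠ M := by omega
      have := hdyn 0 (by omega)
      simp only [hz', if_neg h01, zero_add]
      rw [this, hz0]
    · intro τ hτ
      rcases eq_or_lt_of_le (Nat.lt_iff_add_one_le.mp hτ) with h | h
      ·
        have hτM : τ + 1 = M := by omega
        have hτne : τ ≠ M := by omega
        simp only [hz', hv', if_pos hτM, if_neg hτne, hτM]
        rw [hvlast]
        simp
      · have h1 : τ + 1 ≠ M := by omega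
        have h2 : τ ≠ M := by omega
        simp only [hz', hv', if_neg h1, if_neg h2]
        exact hdyn (τ+1) (by omega)
    · intro τ hτ
      rcases eq_or_ne τ M with h | h
      · simpa [hz', h] using hterm
      · simp only [hz', if_neg h]
        exact hzX (τ+1) (by omega)
    · intro τ hτ
      rcases eq_or_ne τ M with h | h
      · simpa [hv', h] using hU0
      · simp only [hv', if_neg h]
        exact hvU (τ+1) (by omega)
  -- cost of shifted trajectory
  have hcost : ∑ τ ∈ range N, stageCost Q R (z' τ) (v' τ) =
      (∑ τ ∈ range M, stageCost Q R (zstar (τ+1)) (vstar (τ+1)))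
        + stageCost Q R (A *ᵥ zstar M) 0 := by
    rw [hMN, Finset.sum_range_succ]
    congr 1
    · refine Finset.sum_congr rfl fun τ hτ => ?_
      have h : τ ≠ M := by exact Nat.ne_of_lt (Finset.mem_range.mp hτ)
      simp [hz', hv', if_neg h]
    · simp [hz', hv']
  have hcoststar : ∑ τ ∈ range N, stageCost Q R (zstar τ) (vstar τ) =
      (∑ τ ∈ range M, stageCost Q R (zstar (τ+1)) (vstar (τ+1)))
        + stageCost Q R xbar (vstar 0) := by
    rw [hMN, Finset.sum_range_succ']
    rw [hz0]
  -- bound on terminal term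
  have hterm_bound : stageCost Q R (A *ᵥ zstar M) 0 ≤ κ * Φ * stageCost Q R xbar (vstar 0) := by
    have hκ2 := hκ.dotProduct_mulVec_nonneg (zstar M)
    simp only [star_trivial, sub_mulVec, smul_mulVec, dotProduct_sub,
      dotProduct_smul, smul_eq_mul, sub_nonneg] at hκ2
    have key : (A *ᵥ zstar M) ⬝ᵥ Q *ᵥ (A *ᵥ zstar M)
        = zstar M ⬝ᵥ (Aᵀ * Q * A) *ᵥ zstar M := by
      conv_lhs => rw [Matrix.dotProduct_mulVec, Matrix.dotProduct_mulVec]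
      conv_rhs => rw [Matrix.dotProduct_mulVec]
      rw [← Matrix.vecMul_vecMul, ← Matrix.vecMul_vecMul, Matrix.vecMul_transpose]
    have h1 : stageCost Q R (A *ᵥ zstar M) 0 = (1/2) * ((A *ᵥ zstar M) ⬝ᵥ Q *ᵥ (A *ᵥ zstar M)) := by
      simp [stageCost]
    rw [h1, key]
    calc (1/2) * (zstar M ⬝ᵥ (Aᵀ * Q * A) *ᵥ zstar M)
        ≤ (1/2) * (κ * (zstar M ⬝ᵥ Q *ᵥ zstar M)) := by nlinarith
      _ = κ * minStageCost Q (zstar M) := by rw [minStageCost]; ring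
      _ ≤ κ * (Φ * stageCost Q R xbar (vstar 0)) := mul_le_mul_of_nonneg_left hΦ hκ0
      _ = κ * Φ * stageCost Q R xbar (vstar 0) := by ring
  have hℓ0 : 0 ≤ stageCost Q R xbar (vstar 0) := stageCost_nonneg hQ hR _ _
  -- valueFn at new point ≤ cost of shifted trajectory
  have hbdd : BddBelow {r : ℝ | ∃ (z : ℕ → Fin n → ℝ) (v : ℕ → Fin m → ℝ),
      Admissible A B X U N (A *ᵥ xbar + B *ᵥ vstar 0) z v ∧
        r = ∑ τ ∈ range N, stageCost Q R (z τ) (v τ)} := by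
    refine ⟨0, fun r hr => ?_⟩
    obtain ⟨z, v, _, rfl⟩ := hr
    exact Finset.sum_nonneg fun τ _ => stageCost_nonneg hQ hR _ _
  have hle : valueFn A B Q R X U N (A *ᵥ xbar + B *ᵥ vstar 0) ≤
      ∑ τ ∈ range N, stageCost Q R (z' τ) (v' τ) :=
    csInf_le hbdd ⟨z', v', hadm', rfl⟩
  -- conclude
  rw [hval, hcoststar]
  rw [hcost] at hle
  nlinarith [mul_le_mul_of_nonneg_right hα hℓ0]
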